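/- arXiv:0812.2817 — 7 statements merged into one kernel-verified Lean document; each statement's English description precedes it below -/
import Mathlib

section
/- Let G be a connected multigraph with vertex set {0,1,...,n} and let f be a G-parking function. Then the sum of f over all vertices satisfies f(0) + Σ_{v=1}^n f(v) ≤ |E(G)| - |V(G)|, i.e., the quantity w(f) = |E(G)| - |V(G)| - Σ_{v=0}^n f(v) is a nonnegative integer. -/
open Finset

/-- Number of edges of the multigraph with edge multiset `E` joining `v` to a vertex outside `I`. -/
def outdeg {V : Type} [Fintype V] [DecidableEq V] (E : Multiset (Sym2 V))
    (I : Finset V) (v : V) : ℕ :=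
  Multiset.card (E.filter (fun e => ∃ w, w ∉ I ∧ e = s(v, w)))

/-- `f` is a `G`-parking function with root `r`, where `G` has edge multiset `E`. -/
def IsGPF {V : Type} [Fintype V] [DecidableEq V] (E : Multiset (Sym2 V)) (r : V)
    (f : V → ℤ) : Prop :=
  f r = -1 ∧ ∀ I : Finset V, I.Nonempty → r ∉ I →
    ∃ v ∈ I, 0 ≤ f v ∧ f v < (outdeg E I v : ℤ)

/-- The simple graph underlying the multigraph with edge multiset `E`. -/
def mAdj {V : Type} [DecidableEq V] (E : Multiset (Sym2 V)) : SimpleGraph V :=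
  SimpleGraph.fromRel (fun v w => s(v, w) ∈ E)

/-- classical parking function. -/
def IsPF (n : ℕ) (a : Fin n → ℕ) : Prop :=
  ∃ σ : Equiv.Perm (Fin n), Monotone (a ∘ σ) ∧ ∀ i : Fin n, (a ∘ σ) i ≤ i

def IsCritMax (n : ℕ) (a : Fin n → ℕ) (i : Fin n) : Prop :=
  (univ.filter (fun k => a i < a k)).card = n - 1 - a i ∧ ∀ k, a i < a k → k < i

open scoped Classical in
noncomputable def cm (n : ℕ) (a : Fin n → ℕ) : ℕ :=
  (univ.filter (IsCritMax n a)).card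

noncomputable def comps {V : Type} [Fintype V] [DecidableEq V] (M : Multiset (Sym2 V)) : ℕ :=
  Nat.card (mAdj M).ConnectedComponent

noncomputable def rk {V : Type} [Fintype V] [DecidableEq V] (M : Multiset (Sym2 V)) : ℕ :=
  Fintype.card V - comps M

/-- Tutte polynomial (Whitney rank formula) of the multigraph with edges indexed by `ε`. -/
noncomputable def tutte {V : Type} [Fintype V] [DecidableEq V] {ε : Type} [Fintype ε]
    (ends : ε → Sym2 V) (x y : ℤ) : ℤ :=
  ∑ A : Finset ε,
    (x - 1) ^ (rk (Finset.univ.val.map ends) - rk (A.val.map ends)) *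
      (y - 1) ^ (A.card - rk (A.val.map ends))

noncomputable def tutteK (n : ℕ) (x y : ℤ) : ℤ :=
  tutte (fun e : ↥(⊤ : SimpleGraph (Fin (n + 1))).edgeFinset => (e : Sym2 (Fin (n + 1)))) x y

lemma key (n : ℕ) (E : Multiset (Sym2 (Fin (n + 1)))) (f : Fin (n + 1) → ℤ)
    (hf : IsGPF E 0 f) :
    ∀ I : Finset (Fin (n + 1)), (0 : Fin (n + 1)) ∉ I →
      ∑ v ∈ I, (f v + 1) ≤
        (Multiset.card (E.filter (fun e => ∃ v ∈ I, ∃ w, e = s(v, w))) : ℤ) := by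
  intro I
  induction I using Finset.strongInduction with
  | _ I ih =>
    intro h0
    rcases I.eq_empty_or_nonempty with rfl | hne
    · simp
    obtain ⟨v, hvI, hv0, hvlt⟩ := hf.2 I hne h0
    have hsub : I.erase v ⊂ I := Finset.erase_ssubset hvI
    have IH := ih _ hsub (fun h => h0 (Finset.mem_of_mem_erase h))
    have hsum : ∑ u ∈ I, (f u + 1) = (f v + 1) + ∑ u ∈ I.erase v, (f u + 1) :=
      (Finset.add_sum_erase _ _ hvI).symm
    have hcard :
        outdeg E I v +
          Multiset.card (E.filter (fun e => ∃ u ∈ I.erase v, ∃ w, e = s(u, w))) ≤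
        Multiset.card (E.filter (fun e => ∃ u ∈ I, ∃ w, e = s(u, w))) := by
      classical
      set p : Sym2 (Fin (n + 1)) → Prop := fun e => ∃ w, w ∉ I ∧ e = s(v, w) with hp
      set q : Sym2 (Fin (n + 1)) → Prop := fun e => ∃ u ∈ I.erase v, ∃ w, e = s(u, w) with hq
      set r : Sym2 (Fin (n + 1)) → Prop := fun e => ∃ u ∈ I, ∃ w, e = s(u, w) with hr
      have hdisj : ∀ e, ¬(p e ∧ q e) := by
        rintro e ⟨⟨w, hw, rfl⟩, u, hu, w', he⟩
        rw [Sym2.eq_iff] at he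
        rcases he with ⟨h1, h2⟩ | ⟨h1, h2⟩
        · exact (Finset.ne_of_mem_erase hu) h1.symm
        · exact hw (h2 ▸ Finset.mem_of_mem_erase hu)
      have hsumfilter :
          E.filter p + E.filter q = E.filter (fun e => p e ∨ q e) + E.filter (fun e => p e ∧ q e) :=
        Multiset.filter_add_filter p q E
      have h0' : E.filter (fun e => p e ∧ q e) = 0 := by
        rw [Multiset.filter_eq_nil]
        exact fun e _ => hdisj e
      have hle : E.filter (fun e => p e ∨ q e) ≤ E.filter r := by
        apply Multiset.monotone_filter_right
        rintro e (⟨w, hw, rfl⟩ | ⟨u, hu, w, rfl⟩)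
        · exact ⟨v, hvI, w, rfl⟩
        · exact ⟨u, Finset.mem_of_mem_erase hu, w, rfl⟩
      have := congrArg Multiset.card hsumfilter
      rw [Multiset.card_add, Multiset.card_add, h0', Multiset.card_zero, add_zero] at this
      calc outdeg E I v + Multiset.card (E.filter q)
          = Multiset.card (E.filter p) + Multiset.card (E.filter q) := by unfold outdeg; congr
        _ = Multiset.card (E.filter (fun e => p e ∨ q e)) := this
        _ ≤ Multiset.card (E.filter r) := Multiset.card_le_card hle
    have h1 : f v + 1 ≤ (outdeg E I v : ℤ) := by omega
    push_cast at hcard ⊢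
    rw [hsum]
    calc (f v + 1) + ∑ u ∈ I.erase v, (f u + 1)
        ≤ (outdeg E I v : ℤ) +
          (Multiset.card (E.filter (fun e => ∃ u ∈ I.erase v, ∃ w, e = s(u, w))) : ℤ) :=
          add_le_add h1 IH
      _ ≤ _ := by exact_mod_cast hcard


/-- for a connected multigraph `G` on `{0,...,n}` and a `G`-parking
function `f`, the quantity `w(f) = |E| - |V| - ∑ f` is nonnegative. -/
theorem sum_gpf_le (n : ℕ) (E : Multiset (Sym2 (Fin (n + 1))))
    (hconn : (mAdj E).Connected) (f : Fin (n + 1) → ℤ) (hf : IsGPF E 0 f) :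
    ∑ v, f v ≤ (Multiset.card E : ℤ) - (n + 1) := by
  have h := key n E f hf (univ.erase 0) (Finset.notMem_erase _ _)
  have h2 := le_trans h (by exact_mod_cast Multiset.card_le_card (Multiset.filter_le _ E) :
    _ ≤ (Multiset.card E : ℤ))
  have hcarderase : (univ.erase (0 : Fin (n+1))).card = n := by
    rw [Finset.card_erase_of_mem (Finset.mem_univ _), Finset.card_univ, Fintype.card_fin]
    rfl
  have hsplit : ∑ v, f v = f 0 + ∑ v ∈ univ.erase 0, f v :=
    (Finset.add_sum_erase _ _ (Finset.mem_univ 0)).symm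
  have hsum2 : ∑ v ∈ univ.erase (0 : Fin (n+1)), (f v + 1) = (∑ v ∈ univ.erase 0, f v) + n := by
    rw [Finset.sum_add_distrib, Finset.sum_const, hcarderase]
    push_cast; ring
  rw [hsum2] at h2
  rw [hsplit, hf.1]
  linarith
end

section
/- Let G be a connected multigraph on {0,1,...,n}, let u be a neighbor of 0, let e be an edge joining 0 and u, and suppose e is neither a loop nor a bridge. Then the map sending f to the function g with g(u) = f(u) - 1 and g(w) = f(w) for w ≠ u is a bijection from the set of G-parking functions f with f(u) ≥ 1 to the set of (G - e)-parking functions, where G - e is G with the edge e deleted. -/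
open Finset

lemma outdeg_erase {n : ℕ} (E : Multiset (Sym2 (Fin (n + 1)))) (u : Fin (n + 1))
    (he : s(0, u) ∈ E) (I : Finset (Fin (n + 1))) (h0 : (0 : Fin (n + 1)) ∉ I)
    {v : Fin (n + 1)} (hv : v ∈ I) :
    outdeg E I v = outdeg (E.erase s(0, u)) I v + (if v = u then 1 else 0) := by
  classical
  unfold outdeg
  conv_lhs => rw [← Multiset.cons_erase he]
  rw [@Multiset.filter_cons _ _ (fun a => Fintype.decidableExistsFintype)]
  by_cases hvu : v = u
  · subst hvu
    have hp : ∃ w, w ∉ I ∧ s(0, v) = s(v, w) := ⟨0, h0, Sym2.eq_swap⟩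
    rw [if_pos hp]
    simp [add_comm]
  · have hp : ¬∃ w, w ∉ I ∧ s(0, u) = s(v, w) := by
      rintro ⟨w, hw, heq⟩
      rw [Sym2.eq_iff] at heq
      rcases heq with ⟨h1, h2⟩ | ⟨h1, h2⟩
      · exact h0 (h1 ▸ hv)
      · exact hvu h2.symm
    rw [if_neg hp]
    simp [hvu]


/-- deleting a non-loop non-bridge edge `e = {0,u}`, the map
`f ↦ f - χ_u` is a bijection from `G`-parking functions with `f(u) ≥ 1`
to `(G-e)`-parking functions. -/
theorem deletion_bijection (n : ℕ) (E : Multiset (Sym2 (Fin (n + 1))))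
    (hconn : (mAdj E).Connected) (u : Fin (n + 1)) (hu : u ≠ 0)
    (he : s(0, u) ∈ E) (hnb : (mAdj (E.erase s(0, u))).Connected) :
    Set.BijOn (fun f : Fin (n + 1) → ℤ => fun w => if w = u then f w - 1 else f w)
      {f | IsGPF E 0 f ∧ 1 ≤ f u}
      {g | IsGPF (E.erase s(0, u)) 0 g} := by
  classical
  have h0u : (0 : Fin (n + 1)) ≠ u := fun h => hu h.symm
  refine ⟨?_, ?_, ?_⟩
  · rintro f ⟨⟨hf0, hfI⟩, hfu⟩
    refine ⟨?_, ?_⟩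
    · simpa [if_neg h0u] using hf0
    · intro I hI h0
      obtain ⟨v, hvI, hv0, hvlt⟩ := hfI I hI h0
      have hout := outdeg_erase E u he I h0 hvI
      refine ⟨v, hvI, ?_, ?_⟩
      · by_cases hvu : v = u
        · subst hvu; simp only [if_pos rfl]; omega
        · simp only [if_neg hvu]; exact hv0
      · by_cases hvu : v = u
        · subst hvu
          simp only [if_pos rfl]
          rw [hout, if_pos rfl] at hvlt
          push_cast at hvlt ⊢
          omega
        · simp only [if_neg hvu]
          rw [hout, if_neg hvu] at hvlt
          simpa using hvlt
  · rintro f1 hf1 f2 hf2 h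
    funext w
    have hw := congrFun h w
    simp only at hw
    by_cases hwu : w = u
    · rw [if_pos hwu, if_pos hwu] at hw; omega
    · rwa [if_neg hwu, if_neg hwu] at hw
  · rintro g ⟨hg0, hgI⟩
    have hgu : 0 ≤ g u := by
      obtain ⟨v, hv, hv0, _⟩ := hgI {u} ⟨u, Finset.mem_singleton_self u⟩
        (by simp [h0u])
      rw [Finset.mem_singleton] at hv
      exact hv ▸ hv0
    refine ⟨fun w => if w = u then g w + 1 else g w, ⟨⟨?_, ?_⟩, ?_⟩, ?_⟩
    · simpa [if_neg h0u] using hg0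
    · intro I hI h0
      obtain ⟨v, hvI, hv0, hvlt⟩ := hgI I hI h0
      have hout := outdeg_erase E u he I h0 hvI
      refine ⟨v, hvI, ?_, ?_⟩
      · by_cases hvu : v = u
        · simp only [if_pos hvu]; omega
        · simp only [if_neg hvu]; exact hv0
      · by_cases hvu : v = u
        · subst hvu
          simp only [if_pos rfl]
          rw [hout, if_pos rfl]
          push_cast
          omega
        · simp only [if_neg hvu]
          rw [hout, if_neg hvu]
          simpa using hvlt
    · simpa using hgu
    · funext w
      by_cases hwu : w = u
      · simp [hwu]
      · simp [hwu]
end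

section
/- Let G be a connected multigraph on {0,1,...,n}, let u be a neighbor of 0, and let e be an edge joining 0 and u. Then the map sending f to its restriction away from u (i.e., g(w) = f(w) for all w ≠ u) is a bijection from the set of G-parking functions f with f(u) = 0 to the set of (G/e)-parking functions, where G/e is obtained by contracting the edge e (identifying u with 0). -/
open Finset

lemma key_outdeg {V : Type} [Fintype V] [DecidableEq V]
    (E : Multiset (Sym2 V)) (u r : V) (hur : r ≠ u)
    (π : V → {v : V // v ≠ u})
    (hπu : π u = ⟨r, hur⟩) (hπ : ∀ a (h : a ≠ u), π a = ⟨a, h⟩)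
    (hmem : s(r, u) ∈ E)
    (I : Finset V) (I' : Finset {v : V // v ≠ u})
    (hI : ∀ a, π a ∈ I' ↔ a ∈ I)
    (v : V) (hvu : v ≠ u) (hvr : v ≠ r) :
    outdeg ((E.erase s(r, u)).map (Sym2.map π)) I' ⟨v, hvu⟩ = outdeg E I v := by
  classical
  have hav : ∀ a, π a = ⟨v, hvu⟩ → a = v := by
    intro a ha
    by_cases h : a = u
    · subst h; rw [hπu] at ha
      exact absurd (congrArg Subtype.val ha).symm (Ne.symm hvr ∘ Eq.symm)
    · rw [hπ a h] at ha; exact congrArg Subtype.val ha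
  have key : ∀ e : Sym2 V,
      ((∃ w', w' ∉ I' ∧ Sym2.map π e = s((⟨v, hvu⟩ : {x : V // x ≠ u}), w')) ↔
        ∃ w, w ∉ I ∧ e = s(v, w)) := by
    intro e
    induction e using Sym2.ind with
    | _ a b =>
      rw [Sym2.map_pair_eq]
      constructor
      · rintro ⟨w', hw', hmap⟩
        rw [Sym2.eq_iff] at hmap
        rcases hmap with ⟨h1, h2⟩ | ⟨h1, h2⟩
        · exact ⟨b, by rw [← hI, h2]; exact hw', by rw [hav a h1]⟩
        · exact ⟨a, by rw [← hI, h1]; exact hw', by rw [hav b h2, Sym2.eq_swap]⟩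
      · rintro ⟨w, hw, hsab⟩
        refine ⟨π w, by rw [hI]; exact hw, ?_⟩
        calc s(π a, π b) = Sym2.map π s(a, b) := (Sym2.map_pair_eq π a b).symm
          _ = Sym2.map π s(v, w) := by rw [hsab]
          _ = s(π v, π w) := Sym2.map_pair_eq π v w
          _ = s((⟨v, hvu⟩ : {x : V // x ≠ u}), π w) := by rw [hπ v hvu]
  have h1 : Multiset.filter (fun e => ∃ w, w ∉ I ∧ e = s(v, w)) E
      = Multiset.filter (fun e => ∃ w, w ∉ I ∧ e = s(v, w)) (E.erase s(r, u)) := by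
    conv_lhs => rw [← Multiset.cons_erase hmem]
    rw [Multiset.filter_cons_of_neg]
    rintro ⟨w, hw, hs⟩
    rw [Sym2.eq_iff] at hs
    rcases hs with ⟨h1, _⟩ | ⟨_, h2⟩
    · exact hvr h1.symm
    · exact hvu h2.symm
  unfold outdeg
  rw [Multiset.filter_map, Multiset.card_map, h1]
  refine congrArg Multiset.card (Multiset.filter_congr fun e _ => ?_)
  exact key e

/-- contracting an edge `e = {0,u}` (identifying `u` with the root `0`),
restriction away from `u` is a bijection from `G`-parking functions with `f(u) = 0`
to `(G/e)`-parking functions. -/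
theorem contraction_bijection (n : ℕ) (E : Multiset (Sym2 (Fin (n + 1))))
    (hconn : (mAdj E).Connected) (u : Fin (n + 1)) (hu : u ≠ 0)
    (he : s(0, u) ∈ E) :
    Set.BijOn (fun f : Fin (n + 1) → ℤ => fun w : {v : Fin (n + 1) // v ≠ u} => f w.val)
      {f | IsGPF E 0 f ∧ f u = 0}
      {g | IsGPF
        ((E.erase s(0, u)).map (Sym2.map
          (fun v => if h : v = u then (⟨0, hu.symm⟩ : {v : Fin (n + 1) // v ≠ u}) else ⟨v, h⟩)))
        (⟨0, hu.symm⟩ : {v : Fin (n + 1) // v ≠ u}) g} := by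
  classical
  set π : Fin (n + 1) → {v : Fin (n + 1) // v ≠ u} :=
    fun v => if h : v = u then (⟨0, hu.symm⟩ : {v : Fin (n + 1) // v ≠ u}) else ⟨v, h⟩
    with hπdef
  have hπu : π u = ⟨0, hu.symm⟩ := by simp [hπdef]
  have hπ : ∀ a (h : a ≠ u), π a = ⟨a, h⟩ := fun a h => by simp [hπdef, h]
  refine ⟨?_, ?_, ?_⟩
  · -- MapsTo
    rintro f ⟨⟨hf0, hfI⟩, hfu⟩
    refine ⟨hf0, ?_⟩
    intro I' hI'ne hI'root
    set I : Finset (Fin (n + 1)) := univ.filter (fun a => π a ∈ I') with hIdef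
    have hmemI : ∀ a, a ∈ I ↔ π a ∈ I' := fun a => by simp [hIdef]
    have hune : u ∉ I := by rw [hmemI, hπu]; exact hI'root
    have h0 : (0 : Fin (n + 1)) ∉ I := by rw [hmemI, hπ 0 hu.symm]; exact hI'root
    have hne : I.Nonempty := by
      obtain ⟨w, hw⟩ := hI'ne
      exact ⟨w.val, by rw [hmemI, hπ w.val w.prop]; exact hw⟩
    obtain ⟨v, hvI, hv0, hvlt⟩ := hfI I hne h0
    have hvu : v ≠ u := fun h => hune (h ▸ hvI)
    have hv0' : v ≠ 0 := fun h => h0 (h ▸ hvI)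
    refine ⟨⟨v, hvu⟩, ?_, hv0, ?_⟩
    · rw [← hπ v hvu]; exact (hmemI v).1 hvI
    · rw [key_outdeg E u 0 hu.symm π hπu hπ he I I' (fun a => (hmemI a).symm) v hvu hv0']
      exact hvlt
  · -- InjOn
    rintro f1 ⟨_, hf1u⟩ f2 ⟨_, hf2u⟩ hfeq
    funext a
    by_cases h : a = u
    · subst h; rw [hf1u, hf2u]
    · exact congrFun hfeq ⟨a, h⟩
  · -- SurjOn
    rintro g ⟨hg0, hgI⟩
    refine ⟨fun a => if h : a = u then 0 else g ⟨a, h⟩, ⟨⟨?_, ?_⟩, by simp⟩, ?_⟩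
    · beta_reduce; rw [dif_neg hu.symm]; exact hg0
    · intro I hIne hI0
      by_cases huI : u ∈ I
      · refine ⟨u, huI, by simp, ?_⟩
        have hmem : s(0, u) ∈ E.filter (fun e => ∃ w, w ∉ I ∧ e = s(u, w)) :=
          Multiset.mem_filter.2 ⟨he, 0, hI0, Sym2.eq_swap⟩
        have hpos : 0 < outdeg E I u :=
          Multiset.card_pos_iff_exists_mem.2 ⟨s(0, u), by convert hmem⟩
        simpa using hpos
      · set I' : Finset {v : Fin (n + 1) // v ≠ u} := univ.filter (fun w => w.val ∈ I)
          with hI'def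
        have hmem' : ∀ a, π a ∈ I' ↔ a ∈ I := by
          intro a
          by_cases h : a = u
          · subst h; rw [hπu]; simp [hI'def, hI0, huI]
          · rw [hπ a h]; simp [hI'def]
        have hroot' : (⟨0, hu.symm⟩ : {v : Fin (n + 1) // v ≠ u}) ∉ I' := by
          rw [← hπ 0 hu.symm, hmem']; exact hI0
        have hne' : I'.Nonempty := by
          obtain ⟨x, hx⟩ := hIne
          have hxu : x ≠ u := fun h => huI (h ▸ hx)
          exact ⟨⟨x, hxu⟩, by simp [hI'def, hx]⟩
        obtain ⟨w, hwI', hw0, hwlt⟩ := hgI I' hne' hroot'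
        have hwv : w.val ∈ I := by simpa [hI'def] using hwI'
        have hw0' : w.val ≠ 0 := by
          intro h
          apply hroot'
          have : w = ⟨0, hu.symm⟩ := Subtype.ext h
          rwa [this] at hwI'
        refine ⟨w.val, hwv, ?_, ?_⟩
        · beta_reduce; rw [dif_neg w.prop]; exact hw0
        · beta_reduce
          rw [dif_neg w.prop]
          rw [show outdeg E I w.val
              = outdeg ((E.erase s(0, u)).map (Sym2.map π)) I' ⟨w.val, w.prop⟩ from
            (key_outdeg E u 0 hu.symm π hπu hπ he I I' hmem' w.val w.prop hw0').symm]
          exact hwlt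
    · funext w
      simp only
      rw [dif_neg w.prop]
end

section
/- Under the bijection φ from G-parking functions f with f(u) = 0 to (G/e)-parking functions (where e joins the root 0 to u), the statistic w is preserved: w_{G/e}(φ(f)) = w_G(f), where w_H(h) = |E(H)| - |V(H)| - Σ_v h(v). -/
open Finset

/-- the contraction bijection `φ` preserves the statistic
`w_H(h) = |E(H)| - |V(H)| - ∑ h`. -/
theorem contraction_preserves_w (n : ℕ) (E : Multiset (Sym2 (Fin (n + 1))))
    (hconn : (mAdj E).Connected) (u : Fin (n + 1)) (hu : u ≠ 0)
    (he : s(0, u) ∈ E) (f : Fin (n + 1) → ℤ) (hf : IsGPF E 0 f) (hfu : f u = 0) :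
    (Multiset.card ((E.erase s(0, u)).map (Sym2.map
        (fun v => if h : v = u then (⟨0, hu.symm⟩ : {v : Fin (n + 1) // v ≠ u}) else ⟨v, h⟩))) : ℤ)
      - Fintype.card {v : Fin (n + 1) // v ≠ u}
      - ∑ w : {v : Fin (n + 1) // v ≠ u}, f w.val
    = (Multiset.card E : ℤ) - (n + 1) - ∑ v, f v := by
  have hcard : Multiset.card (E.erase s(0, u)) = Multiset.card E - 1 :=
    Multiset.card_erase_of_mem he
  have hE1 : 1 ≤ Multiset.card E := Multiset.card_pos_iff_exists_mem.mpr ⟨_, he⟩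
  have hsub : Fintype.card {v : Fin (n + 1) // v ≠ u} = n := by
    simp [Fintype.card_subtype_compl]
  have hsum : ∑ w : {v : Fin (n + 1) // v ≠ u}, f w.val
      = ∑ v ∈ Finset.univ.erase u, f v := by
    exact (Finset.sum_subtype (p := fun v => v ≠ u) (Finset.univ.erase u) (fun x => by simp) f).symm
  have hsum2 : ∑ v, f v = f u + ∑ v ∈ Finset.univ.erase u, f v :=
    (Finset.add_sum_erase _ f (Finset.mem_univ u)).symm
  rw [Multiset.card_map, hcard, hsub, hsum, hsum2, hfu]
  push_cast [Nat.cast_sub hE1]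
  ring
end

section
/- The number of G-parking functions of a connected multigraph G equals the number of spanning trees of G (counted with multiplicity of multiple edges). -/
open Finset

section Aux
variable {V : Type} [Fintype V] [DecidableEq V]

lemma outdeg_cons (a : Sym2 V) (M : Multiset (Sym2 V)) (I : Finset V) (u : V) :
    outdeg (a ::ₘ M) I u = outdeg M I u + (if ∃ w, w ∉ I ∧ a = s(u, w) then 1 else 0) := by
  unfold outdeg
  rw [Multiset.filter_cons, Multiset.card_add]
  split <;> simp [add_comm]

lemma outdeg_le_cons (a : Sym2 V) (M : Multiset (Sym2 V)) (I : Finset V) (u : V) :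
    outdeg M I u ≤ outdeg (a ::ₘ M) I u := by
  rw [outdeg_cons]; omega

lemma gpf_nonneg {E : Multiset (Sym2 V)} {r : V} {f : V → ℤ} (hf : IsGPF E r f)
    {v : V} (hv : v ≠ r) : 0 ≤ f v ∧ f v < (outdeg E {v} v : ℤ) := by
  obtain ⟨u, hu, h⟩ := hf.2 {v} ⟨v, mem_singleton_self v⟩ (by simp [Ne.symm hv])
  rw [mem_singleton] at hu; subst hu; exact h

lemma outdeg_le_card (E : Multiset (Sym2 V)) (I : Finset V) (v : V) :
    outdeg E I v ≤ Multiset.card E :=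
  Multiset.card_le_card (Multiset.filter_le _ _)

lemma finite_gpf (E : Multiset (Sym2 V)) (r : V) : Finite {f : V → ℤ // IsGPF E r f} := by
  set N : ℤ := (Multiset.card E : ℤ) with hN
  have key : ∀ (f : V → ℤ), IsGPF E r f → ∀ v, f v ∈ Set.Icc (-1 : ℤ) N := by
    intro f hf v
    rw [Set.mem_Icc]
    have hN0 : (0:ℤ) ≤ N := by rw [hN]; positivity
    by_cases hv : v = r
    · subst hv; rw [hf.1]; exact ⟨le_refl _, by linarith⟩
    · have h := gpf_nonneg hf hv
      have h2 := outdeg_le_card E {v} v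
      have h3 : (outdeg E {v} v : ℤ) ≤ N := by rw [hN]; exact_mod_cast h2
      exact ⟨by linarith [h.1], by linarith [h.2]⟩
  have hinj : Function.Injective
      (fun f : {f : V → ℤ // IsGPF E r f} =>
        (fun v => (⟨f.1 v, key f.1 f.2 v⟩ : Set.Icc (-1:ℤ) N))) := by
    intro f g h
    ext v
    exact congrArg Subtype.val (congrFun h v)
  exact Finite.of_injective _ hinj

end Aux

section Split

lemma card_split {α : Type*} (p q : α → Prop) [Finite {x // p x}] :
    Nat.card {x // p x} = Nat.card {x // p x ∧ q x} + Nat.card {x // p x ∧ ¬ q x} := by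
  classical
  have e1 : {x // p x ∧ q x} ≃ {y : {x // p x} // q y.val} :=
    (Equiv.subtypeSubtypeEquivSubtypeInter p q).symm
  have e2 : {x // p x ∧ ¬ q x} ≃ {y : {x // p x} // ¬ q y.val} :=
    (Equiv.subtypeSubtypeEquivSubtypeInter p (fun x => ¬ q x)).symm
  have e3 : {y : {x // p x} // q y.val} ⊕ {y : {x // p x} // ¬ q y.val} ≃ {x // p x} :=
    Equiv.sumCompl _
  have : Finite ({y : {x // p x} // q y.val}) := Subtype.finite
  have : Finite ({y : {x // p x} // ¬ q y.val}) := Subtype.finite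
  rw [← Nat.card_congr e3, Nat.card_sum, Nat.card_congr e1, Nat.card_congr e2]

end Split

section Contract
variable {V : Type} [Fintype V] [DecidableEq V] {v r : V}

/-- contraction map collapsing `v` onto `r`. -/
def ctr (v r : V) (hv : v ≠ r) : V → {x : V // x ≠ v} := fun x =>
  if h : x = v then ⟨r, Ne.symm hv⟩ else ⟨x, h⟩

lemma ctr_val (hv : v ≠ r) (u : {x : V // x ≠ v}) : ctr v r hv u.val = u := by
  cases u with
  | mk x hx => simp [ctr, hx]

lemma ctr_v (hv : v ≠ r) : ctr v r hv v = ⟨r, Ne.symm hv⟩ := by simp [ctr]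

lemma ctr_ne (hv : v ≠ r) {x : V} (hx : x ≠ v) : ctr v r hv x = ⟨x, hx⟩ := by simp [ctr, hx]

lemma outdeg_contract (hv : v ≠ r) (M : Multiset (Sym2 V)) (I' : Finset {x : V // x ≠ v})
    (u' : {x : V // x ≠ v}) (hu : u' ∈ I') (hr : (⟨r, Ne.symm hv⟩ : {x : V // x ≠ v}) ∉ I') :
    outdeg (M.map (Sym2.map (ctr v r hv))) I' u' = outdeg M (I'.image Subtype.val) u'.val := by
  classical
  unfold outdeg
  rw [Multiset.filter_map, Multiset.card_map]
  congr 1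
  apply Multiset.filter_congr
  intro a _
  constructor
  · rintro ⟨w', hw', hae⟩
    -- hae ready
    induction a using Sym2.ind with
    | _ x y =>
      rw [Sym2.map_pair_eq, Sym2.eq_iff] at hae
      have hur : u' ≠ (⟨r, Ne.symm hv⟩ : {x : V // x ≠ v}) := fun h => hr (h ▸ hu)
      -- two symmetric cases
      rcases hae with ⟨hx, hy⟩ | ⟨hx, hy⟩
      · -- ctr x = u', ctr y = w'
        have hxv : x ≠ v := by
          intro h; subst h; rw [ctr_v] at hx; exact hur hx.symm
        rw [ctr_ne hv hxv] at hx
        have hxu : x = u'.val := by rw [← hx]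
        refine ⟨y, ?_, by rw [hxu]⟩
        intro hy'
        rw [Finset.mem_image] at hy'
        obtain ⟨y', hy'I, hy'v⟩ := hy'
        have hyv : y ≠ v := fun h => y'.2 (by rw [hy'v]; exact h)
        rw [ctr_ne hv hyv] at hy
        apply hw'
        have hyy : y' = (⟨y, hyv⟩ : {x : V // x ≠ v}) := Subtype.ext hy'v
        rw [← hy, ← hyy]
        exact hy'I
      · -- ctr x = w', ctr y = u'
        have hyv : y ≠ v := by
          intro h; subst h; rw [ctr_v] at hy; exact hur hy.symm
        rw [ctr_ne hv hyv] at hy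
        have hyu : y = u'.val := by rw [← hy]
        refine ⟨x, ?_, by rw [hyu, Sym2.eq_swap]⟩
        intro hx'
        rw [Finset.mem_image] at hx'
        obtain ⟨x', hx'I, hx'v⟩ := hx'
        have hxv : x ≠ v := fun h => x'.2 (by rw [hx'v]; exact h)
        rw [ctr_ne hv hxv] at hx
        apply hw'
        have hxx : x' = (⟨x, hxv⟩ : {x : V // x ≠ v}) := Subtype.ext hx'v
        rw [← hx, ← hxx]
        exact hx'I
  · rintro ⟨w, hw, rfl⟩
    simp only [Function.comp_apply, Sym2.map_pair_eq]
    refine ⟨ctr v r hv w, ?_, by rw [ctr_val]⟩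
    intro hmem
    by_cases hwv : w = v
    · subst hwv; rw [ctr_v] at hmem; exact hr hmem
    · rw [ctr_ne hv hwv] at hmem
      exact hw (Finset.mem_image.mpr ⟨⟨w, hwv⟩, hmem, rfl⟩)

end Contract

section PFrec
variable {V : Type} [Fintype V] [DecidableEq V] {v r : V}

lemma outdeg_cons_rv (hv : v ≠ r) (M : Multiset (Sym2 V)) {I : Finset V} {u : V}
    (hu : u ∈ I) (hr : r ∉ I) :
    outdeg (s(r,v) ::ₘ M) I u = outdeg M I u + (if u = v then 1 else 0) := by
  rw [outdeg_cons]
  congr 1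
  have h : (∃ w, w ∉ I ∧ s(r,v) = s(u,w)) ↔ u = v := by
    constructor
    · rintro ⟨w, hw, he⟩
      rw [Sym2.eq_iff] at he
      rcases he with ⟨h1, h2⟩ | ⟨h1, h2⟩
      · exact absurd hu (h1 ▸ hr)
      · exact h2.symm
    · rintro rfl
      exact ⟨r, hr, by rw [Sym2.eq_swap]⟩
  simp only [h]

lemma isgpf_del_of (hv : v ≠ r) {M : Multiset (Sym2 V)} {f : V → ℤ}
    (hf : IsGPF (s(r,v) ::ₘ M) r f) (h1 : 1 ≤ f v) :
    IsGPF M r (fun x => if x = v then f x - 1 else f x) := by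
  refine ⟨?_, ?_⟩
  · show (if r = v then f r - 1 else f r) = -1
    rw [if_neg (Ne.symm hv)]; exact hf.1
  · intro I hI hrI
    obtain ⟨u, huI, h0, hlt⟩ := hf.2 I hI hrI
    rw [outdeg_cons_rv hv M huI hrI] at hlt
    refine ⟨u, huI, ?_⟩
    show 0 ≤ (if u = v then f u - 1 else f u) ∧
      (if u = v then f u - 1 else f u) < (outdeg M I u : ℤ)
    by_cases huv : u = v
    · rw [if_pos huv] at hlt
      rw [if_pos huv]
      push_cast at hlt
      subst huv
      exact ⟨by linarith, by linarith⟩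
    · rw [if_neg huv] at hlt
      rw [if_neg huv]
      push_cast at hlt
      exact ⟨h0, by linarith⟩

lemma isgpf_del_inv (hv : v ≠ r) {M : Multiset (Sym2 V)} {g : V → ℤ}
    (hg : IsGPF M r g) :
    IsGPF (s(r,v) ::ₘ M) r (fun x => if x = v then g x + 1 else g x) := by
  refine ⟨?_, ?_⟩
  · show (if r = v then g r + 1 else g r) = -1
    rw [if_neg (Ne.symm hv)]; exact hg.1
  · intro I hI hrI
    obtain ⟨u, huI, h0, hlt⟩ := hg.2 I hI hrI
    refine ⟨u, huI, ?_⟩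
    show 0 ≤ (if u = v then g u + 1 else g u) ∧
      (if u = v then g u + 1 else g u) < (outdeg (s(r,v) ::ₘ M) I u : ℤ)
    rw [outdeg_cons_rv hv M huI hrI]
    by_cases huv : u = v
    · rw [if_pos huv, if_pos huv]
      push_cast
      exact ⟨by linarith, by linarith⟩
    · rw [if_neg huv, if_neg huv]
      push_cast
      exact ⟨h0, by linarith⟩

lemma image_subtype_of_not_mem {I : Finset V} (hvI : v ∉ I) :
    (I.subtype (· ≠ v)).image Subtype.val = I := by
  classical
  rw [show (Subtype.val : {x : V // x ≠ v} → V)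
      = ⇑(Function.Embedding.subtype fun x : V => x ≠ v) from rfl,
    ← Finset.map_eq_image, Finset.subtype_map, Finset.filter_eq_self]
  intro x hx h
  exact hvI (h ▸ hx)

lemma isgpf_con_of (hv : v ≠ r) {M : Multiset (Sym2 V)} {f : V → ℤ}
    (hf : IsGPF (s(r,v) ::ₘ M) r f) :
    IsGPF (M.map (Sym2.map (ctr v r hv))) ⟨r, Ne.symm hv⟩ (fun u' => f u'.val) := by
  refine ⟨hf.1, ?_⟩
  intro I' hI' hr'
  set I : Finset V := I'.image Subtype.val with hIdef
  have hIne : I.Nonempty := hI'.image _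
  have hrI : r ∉ I := by
    intro hmem
    rw [hIdef, Finset.mem_image] at hmem
    obtain ⟨u', hu'I, hval⟩ := hmem
    exact hr' (by rwa [show u' = (⟨r, Ne.symm hv⟩ : {x : V // x ≠ v}) from Subtype.ext hval]
      at hu'I)
  obtain ⟨u, huI, h0, hlt⟩ := hf.2 I hIne hrI
  rw [Finset.mem_image] at huI
  obtain ⟨u', hu'I, hval⟩ := huI
  refine ⟨u', hu'I, ?_⟩
  show 0 ≤ f u'.val ∧ f u'.val < _
  rw [hval]
  refine ⟨h0, ?_⟩
  rw [outdeg_contract hv M I' u' hu'I hr', ← hIdef, hval]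
  have huv : u ≠ v := fun h => u'.2 (hval.trans h)
  have huI2 : u ∈ I := Finset.mem_image.mpr ⟨u', hu'I, hval⟩
  rw [outdeg_cons_rv hv M huI2 hrI, if_neg huv] at hlt
  simpa using hlt

lemma isgpf_con_inv (hv : v ≠ r) {M : Multiset (Sym2 V)} {g : {x : V // x ≠ v} → ℤ}
    (hg : IsGPF (M.map (Sym2.map (ctr v r hv))) ⟨r, Ne.symm hv⟩ g) :
    IsGPF (s(r,v) ::ₘ M) r (fun x => if h : x = v then 0 else g ⟨x, h⟩) := by
  refine ⟨?_, ?_⟩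
  · show (if h : r = v then (0:ℤ) else g ⟨r, h⟩) = -1
    rw [dif_neg (Ne.symm hv : r ≠ v)]
    exact hg.1
  · intro I hI hrI
    by_cases hvI : v ∈ I
    · refine ⟨v, hvI, ?_⟩
      show 0 ≤ (if h : v = v then (0:ℤ) else g ⟨v, h⟩) ∧
        (if h : v = v then (0:ℤ) else g ⟨v, h⟩) < _
      rw [dif_pos rfl, outdeg_cons_rv hv M hvI hrI, if_pos rfl]
      refine ⟨le_refl _, ?_⟩
      push_cast
      positivity
    · set I' : Finset {x : V // x ≠ v} := I.subtype (· ≠ v) with hI'def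
      have hI'ne : I'.Nonempty := by
        obtain ⟨x, hx⟩ := hI
        have hxv : x ≠ v := fun h => hvI (h ▸ hx)
        exact ⟨⟨x, hxv⟩, by rw [hI'def, Finset.mem_subtype]; exact hx⟩
      have hr' : (⟨r, Ne.symm hv⟩ : {x : V // x ≠ v}) ∉ I' := by
        rw [hI'def, Finset.mem_subtype]
        exact hrI
      obtain ⟨u', hu'I, h0, hlt⟩ := hg.2 I' hI'ne hr'
      have huI : u'.val ∈ I := by rw [hI'def, Finset.mem_subtype] at hu'I; exact hu'I
      refine ⟨u'.val, huI, ?_⟩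
      show 0 ≤ (if h : u'.val = v then (0:ℤ) else g ⟨u'.val, h⟩) ∧
        (if h : u'.val = v then (0:ℤ) else g ⟨u'.val, h⟩) < _
      rw [dif_neg u'.2]
      have heta : (⟨u'.val, u'.2⟩ : {x : V // x ≠ v}) = u' := rfl
      rw [heta]
      refine ⟨h0, ?_⟩
      rw [outdeg_contract hv M I' u' hu'I hr', hI'def, image_subtype_of_not_mem hvI] at hlt
      have hle := outdeg_le_cons (s(r,v)) M I u'.val
      have hle' : (outdeg M I u'.val : ℤ) ≤ (outdeg (s(r,v) ::ₘ M) I u'.val : ℤ) := by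
        exact_mod_cast hle
      linarith

lemma card_pf_del (hv : v ≠ r) (M : Multiset (Sym2 V)) :
    Nat.card {f : V → ℤ // IsGPF (s(r,v) ::ₘ M) r f ∧ 1 ≤ f v}
      = Nat.card {f : V → ℤ // IsGPF M r f} := by
  apply Nat.card_congr
  refine ⟨fun f => ⟨fun x => if x = v then f.1 x - 1 else f.1 x, isgpf_del_of hv f.2.1 f.2.2⟩,
          fun g => ⟨fun x => if x = v then g.1 x + 1 else g.1 x, isgpf_del_inv hv g.2, ?_⟩,
          ?_, ?_⟩
  · show 1 ≤ (if v = v then g.1 v + 1 else g.1 v)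
    rw [if_pos rfl]
    have := (gpf_nonneg g.2 hv).1
    linarith
  · intro f
    apply Subtype.ext
    funext x
    show (if x = v then (if x = v then f.1 x - 1 else f.1 x) + 1
      else (if x = v then f.1 x - 1 else f.1 x)) = f.1 x
    by_cases h : x = v
    · rw [if_pos h, if_pos h]; ring
    · rw [if_neg h, if_neg h]
  · intro g
    apply Subtype.ext
    funext x
    show (if x = v then (if x = v then g.1 x + 1 else g.1 x) - 1
      else (if x = v then g.1 x + 1 else g.1 x)) = g.1 x
    by_cases h : x = v
    · rw [if_pos h, if_pos h]; ring
    · rw [if_neg h, if_neg h]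

lemma card_pf_con (hv : v ≠ r) (M : Multiset (Sym2 V)) :
    Nat.card {f : V → ℤ // IsGPF (s(r,v) ::ₘ M) r f ∧ f v = 0}
      = Nat.card {f' : {x : V // x ≠ v} → ℤ //
          IsGPF (M.map (Sym2.map (ctr v r hv))) ⟨r, Ne.symm hv⟩ f'} := by
  apply Nat.card_congr
  refine ⟨fun f => ⟨fun u' => f.1 u'.val, isgpf_con_of hv f.2.1⟩,
          fun g => ⟨fun x => if h : x = v then 0 else g.1 ⟨x, h⟩, isgpf_con_inv hv g.2, ?_⟩,
          ?_, ?_⟩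
  · show (if h : v = v then (0:ℤ) else g.1 ⟨v, h⟩) = 0
    rw [dif_pos rfl]
  · intro f
    apply Subtype.ext
    funext x
    show (if h : x = v then (0:ℤ) else f.1 x) = f.1 x
    by_cases h : x = v
    · rw [dif_pos h, h]; exact f.2.2.symm
    · rw [dif_neg h]
  · intro g
    apply Subtype.ext
    funext u'
    show (if h : u'.val = v then (0:ℤ) else g.1 ⟨u'.val, h⟩) = g.1 u'
    rw [dif_neg u'.2]

lemma card_pf_rec (hv : v ≠ r) (M : Multiset (Sym2 V)) :
    Nat.card {f : V → ℤ // IsGPF (s(r,v) ::ₘ M) r f}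
      = Nat.card {f : V → ℤ // IsGPF M r f}
      + Nat.card {f' : {x : V // x ≠ v} → ℤ //
          IsGPF (M.map (Sym2.map (ctr v r hv))) ⟨r, Ne.symm hv⟩ f'} := by
  haveI := finite_gpf (s(r,v) ::ₘ M) r
  rw [card_split (IsGPF (s(r,v) ::ₘ M) r) (fun f => 1 ≤ f v)]
  congr 1
  · rw [card_pf_del hv M]
  · rw [← card_pf_con hv M]
    apply Nat.card_congr
    apply Equiv.subtypeEquivRight
    intro f
    constructor
    · rintro ⟨hf, h1⟩
      refine ⟨hf, ?_⟩
      have := (gpf_nonneg hf hv).1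
      omega
    · rintro ⟨hf, h0⟩
      exact ⟨hf, by omega⟩
end PFrec

section Conn
variable {V : Type} [Fintype V] [DecidableEq V] {v r : V}

lemma card_subtype_ne (a : V) : Fintype.card {x : V // x ≠ a} = Fintype.card V - 1 := by
  classical
  have h := Fintype.card_subtype_compl (fun x : V => x = a)
  simp only [Fintype.card_subtype_eq] at h
  convert h using 2

lemma mAdj_iff (E : Multiset (Sym2 V)) (x y : V) :
    (mAdj E).Adj x y ↔ x ≠ y ∧ s(x,y) ∈ E := by
  unfold mAdj
  rw [SimpleGraph.fromRel_adj]
  have h : s(y,x) = s(x,y) := Sym2.eq_swap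
  rw [h, or_self]

lemma reach_of_adj_reach {V' W : Type*} {G : SimpleGraph V'} {G' : SimpleGraph W}
    (φ : V' → W) (h : ∀ x y, G.Adj x y → G'.Reachable (φ x) (φ y)) {a b : V'}
    (hr : G.Reachable a b) : G'.Reachable (φ a) (φ b) := by
  obtain ⟨w⟩ := hr
  induction w with
  | nil => exact SimpleGraph.Reachable.refl _
  | cons hadj p ih => exact (h _ _ hadj).trans ih

lemma conn_contract (hv : v ≠ r) (M : Multiset (Sym2 V)) :
    (mAdj (s(r,v) ::ₘ M)).Connected ↔
      (mAdj (M.map (Sym2.map (ctr v r hv)))).Connected := by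
  set G := mAdj (s(r,v) ::ₘ M) with hG
  set G' := mAdj (M.map (Sym2.map (ctr v r hv))) with hG'
  have hadj_rv : G.Adj r v := by
    rw [hG, mAdj_iff]
    exact ⟨Ne.symm hv, Multiset.mem_cons_self _ _⟩
  constructor
  · intro hc
    rw [SimpleGraph.connected_iff]
    refine ⟨?_, ⟨⟨r, Ne.symm hv⟩⟩⟩
    intro a' b'
    have hstep : ∀ x y : V, G.Adj x y → G'.Reachable (ctr v r hv x) (ctr v r hv y) := by
      intro x y hxy
      rw [hG, mAdj_iff] at hxy
      obtain ⟨hne, hmem⟩ := hxy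
      rcases Multiset.mem_cons.mp hmem with heq | hm
      · have hpi : ctr v r hv x = ctr v r hv y := by
          rw [Sym2.eq_iff] at heq
          rcases heq with ⟨rfl, rfl⟩ | ⟨rfl, rfl⟩
          · rw [ctr_ne hv (Ne.symm hv), ctr_v hv]
          · rw [ctr_ne hv (Ne.symm hv), ctr_v hv]
        rw [hpi]
      · by_cases hpi : ctr v r hv x = ctr v r hv y
        · rw [hpi]
        · apply SimpleGraph.Adj.reachable
          rw [hG', mAdj_iff]
          refine ⟨hpi, ?_⟩
          rw [← Sym2.map_pair_eq]
          exact Multiset.mem_map_of_mem _ hm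
    have := reach_of_adj_reach (ctr v r hv) hstep (hc.preconnected a'.val b'.val)
    rwa [ctr_val hv a', ctr_val hv b'] at this
  · intro hc'
    rw [SimpleGraph.connected_iff]
    refine ⟨?_, ⟨r⟩⟩
    intro a b
    have hlift : ∀ (x : V) (x' : {z : V // z ≠ v}), ctr v r hv x = x' →
        G.Reachable x'.val x := by
      intro x x' hx
      by_cases hxv : x = v
      · subst hxv
        rw [ctr_v hv] at hx
        rw [← hx]
        exact hadj_rv.reachable
      · rw [ctr_ne hv hxv] at hx
        rw [← hx]
    have hstep : ∀ x' y' : {z : V // z ≠ v}, G'.Adj x' y' →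
        G.Reachable x'.val y'.val := by
      intro x' y' h
      rw [hG', mAdj_iff] at h
      obtain ⟨hne, hmem⟩ := h
      rw [Multiset.mem_map] at hmem
      obtain ⟨c, hcM, hceq⟩ := hmem
      induction c using Sym2.ind with
      | _ x y =>
        rw [Sym2.map_pair_eq, Sym2.eq_iff] at hceq
        have hadj : ∀ (p q : V), ctr v r hv p = x' → ctr v r hv q = y' →
            s(p,q) ∈ M → G.Reachable x'.val y'.val := by
          intro p q hp hq hpq
          have hpqne : p ≠ q := by
            intro hh; subst hh; rw [hp] at hq; exact hne (hq ▸ rfl)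
          have hGadj : G.Adj p q := by
            rw [hG, mAdj_iff]
            exact ⟨hpqne, Multiset.mem_cons_of_mem hpq⟩
          exact ((hlift p x' hp).trans hGadj.reachable).trans (hlift q y' hq).symm
        rcases hceq with ⟨hx, hy⟩ | ⟨hx, hy⟩
        · exact hadj x y hx hy hcM
        · exact hadj y x hy hx (by rwa [Sym2.eq_swap])
    have hmain := reach_of_adj_reach Subtype.val hstep
      (hc'.preconnected (ctr v r hv a) (ctr v r hv b))
    have hup : ∀ x : V, G.Reachable x (ctr v r hv x).val := by
      intro x
      by_cases hxv : x = v
      · subst hxv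
        rw [ctr_v hv]
        exact hadj_rv.symm.reachable
      · rw [ctr_ne hv hxv]
    exact ((hup a).trans hmain).trans (hup b).symm
end Conn

section STrec
variable {V : Type} [Fintype V] [DecidableEq V] {v r : V}
variable {ε : Type} [Fintype ε] [DecidableEq ε]

lemma univ_subtype_val_map (p : ε → Prop) [DecidablePred p] {β : Type*} (g : ε → β) :
    ((univ : Finset {x : ε // p x}).val.map (fun x => g x.val))
      = ((univ.filter p : Finset ε).val.map g) := by
  have h1 : (univ : Finset {x // p x}).map (Function.Embedding.subtype p) = univ.filter p := by
    rw [← Finset.subtype_map (p := p) (s := univ), Finset.subtype_univ]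
  rw [← h1, Finset.map_val, Multiset.map_map]
  rfl

lemma subFinset_val_map (p : ε → Prop) [DecidablePred p] (s' : Finset {x : ε // p x})
    {β : Type*} (g : ε → β) :
    (s'.map (Function.Embedding.subtype p)).val.map g = s'.val.map (fun x => g x.val) := by
  rw [Finset.map_val, Multiset.map_map]
  rfl

lemma subtype_map_of_notMem {e : ε} {s : Finset ε} (he : e ∉ s) :
    (s.subtype (· ≠ e)).map (Function.Embedding.subtype _) = s := by
  rw [Finset.subtype_map, Finset.filter_eq_self]
  intro x hx h
  exact he (h ▸ hx)

lemma subtype_map_erase {e : ε} (s : Finset ε) :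
    ((s.erase e).subtype (· ≠ e)).map (Function.Embedding.subtype _) = s.erase e := by
  rw [Finset.subtype_map, Finset.filter_eq_self]
  intro x hx
  exact (Finset.mem_erase.mp hx).1

lemma map_subtype_back {e : ε} (s' : Finset {x : ε // x ≠ e}) :
    ((s'.map (Function.Embedding.subtype _)).subtype (· ≠ e)) = s' := by
  ext a
  rw [Finset.mem_subtype]
  constructor
  · intro h
    rw [Finset.mem_map] at h
    obtain ⟨b, hb, hbe⟩ := h
    have hba : b = a := Subtype.ext hbe
    exact hba ▸ hb
  · intro h
    exact Finset.mem_map_of_mem _ h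

lemma card_st_rec (ends : ε → Sym2 V) (hv : v ≠ r) (e : ε) (he : ends e = s(r,v))
    (hV : 2 ≤ Fintype.card V) :
    Nat.card {s : Finset ε // s.card = Fintype.card V - 1 ∧
        (mAdj (s.val.map ends)).Connected}
    = Nat.card {s' : Finset {x : ε // x ≠ e} // s'.card = Fintype.card V - 1 ∧
        (mAdj (s'.val.map (fun x => ends x.val))).Connected}
    + Nat.card {s' : Finset {x : ε // x ≠ e} //
        s'.card = Fintype.card {x : V // x ≠ v} - 1 ∧
        (mAdj (s'.val.map (fun x => Sym2.map (ctr v r hv) (ends x.val)))).Connected} := by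
  rw [card_split (fun s : Finset ε => s.card = Fintype.card V - 1 ∧
        (mAdj (s.val.map ends)).Connected) (fun s => e ∉ s)]
  congr 1
  · -- deletion part
    apply Nat.card_congr
    refine ⟨fun s => ⟨(s.1.subtype (· ≠ e)), ?_, ?_⟩,
            fun s' => ⟨s'.1.map (Function.Embedding.subtype _), ⟨?_, ?_⟩, ?_⟩, ?_, ?_⟩
    · rw [Finset.card_subtype, Finset.filter_eq_self.mpr]
      · exact s.2.1.1
      · intro x hx h
        exact s.2.2 (h ▸ hx)
    · have h1 := subFinset_val_map (· ≠ e) (s.1.subtype (· ≠ e)) ends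
      rw [← h1, subtype_map_of_notMem s.2.2]
      exact s.2.1.2
    · rw [Finset.card_map]; exact s'.2.1
    · rw [subFinset_val_map]; exact s'.2.2
    · intro hmem
      rw [Finset.mem_map] at hmem
      obtain ⟨b, _, hbe⟩ := hmem
      exact b.2 hbe
    · intro s
      apply Subtype.ext
      exact subtype_map_of_notMem s.2.2
    · intro s'
      apply Subtype.ext
      exact map_subtype_back s'.1
  · -- contraction part
    apply Nat.card_congr
    have key1 : ∀ (s : Finset ε), e ∈ s →
        s.val.map ends = s(r,v) ::ₘ ((s.erase e).val.map ends) := by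
      intro s hes
      conv_lhs => rw [← Multiset.cons_erase (show e ∈ s.val from hes)]
      rw [Multiset.map_cons, he, Finset.erase_val]
    have key2 : ∀ (s : Finset ε),
        ((s.erase e).subtype (· ≠ e)).val.map (fun x => Sym2.map (ctr v r hv) (ends x.val))
          = ((s.erase e).val.map ends).map (Sym2.map (ctr v r hv)) := by
      intro s
      have h1 := subFinset_val_map (· ≠ e) ((s.erase e).subtype (· ≠ e))
        (fun x => Sym2.map (ctr v r hv) (ends x))
      rw [← h1, subtype_map_erase, Multiset.map_map]
      rfl
    have key3 : ∀ (s' : Finset {x : ε // x ≠ e}),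
        s'.val.map (fun x => Sym2.map (ctr v r hv) (ends x.val))
          = (s'.val.map (fun x => ends x.val)).map (Sym2.map (ctr v r hv)) := by
      intro s'
      rw [Multiset.map_map]
      rfl
    have keyNM : ∀ (s' : Finset {x : ε // x ≠ e}),
        e ∉ s'.map (Function.Embedding.subtype _) := by
      intro s' hmem
      rw [Finset.mem_map] at hmem
      obtain ⟨b, _, hbe⟩ := hmem
      exact b.2 hbe
    have key4 : ∀ (s' : Finset {x : ε // x ≠ e}),
        (insert e (s'.map (Function.Embedding.subtype _))).val.map ends
          = s(r,v) ::ₘ (s'.val.map (fun x => ends x.val)) := by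
      intro s'
      rw [Finset.insert_val_of_notMem (keyNM s'), Multiset.map_cons, he,
        subFinset_val_map]
    refine ⟨fun s => ⟨((s.1.erase e).subtype (· ≠ e)), ?_, ?_⟩,
            fun s' => ⟨insert e (s'.1.map (Function.Embedding.subtype _)), ⟨?_, ?_⟩, ?_⟩,
            ?_, ?_⟩
    · have hes : e ∈ s.1 := not_not.mp s.2.2
      rw [Finset.card_subtype, Finset.filter_eq_self.mpr
        (fun x hx => (Finset.mem_erase.mp hx).1), Finset.card_erase_of_mem hes,
        s.2.1.1, card_subtype_ne]
    · have hes : e ∈ s.1 := not_not.mp s.2.2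
      rw [key2]
      rw [← conn_contract hv, ← key1 s.1 hes]
      exact s.2.1.2
    · have h1 : e ∉ s'.1.map (Function.Embedding.subtype _) := keyNM s'.1
      rw [Finset.card_insert_of_notMem h1, Finset.card_map, s'.2.1, card_subtype_ne]
      omega
    · rw [key4]
      rw [conn_contract hv, ← key3]
      exact s'.2.2
    · exact not_not.mpr (Finset.mem_insert_self _ _)
    · intro s
      apply Subtype.ext
      have hes : e ∈ s.1 := not_not.mp s.2.2
      show insert e (((s.1.erase e).subtype (· ≠ e)).map (Function.Embedding.subtype _)) = s.1
      rw [subtype_map_erase, Finset.insert_erase hes]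
    · intro s'
      apply Subtype.ext
      show ((insert e (s'.1.map (Function.Embedding.subtype _))).erase e).subtype (· ≠ e) = s'.1
      rw [Finset.erase_insert (keyNM s'.1), map_subtype_back]
end STrec

section BaseCases
variable {V : Type} [Fintype V] [DecidableEq V] {ε : Type} [Fintype ε]

lemma card_pf_one (h1 : Fintype.card V = 1) (E : Multiset (Sym2 V)) (r : V) :
    Nat.card {f : V → ℤ // IsGPF E r f} = 1 := by
  haveI hsub : Subsingleton V := Fintype.card_le_one_iff_subsingleton.mp (le_of_eq h1)
  have hdef : IsGPF E r (fun _ => -1) := by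
    refine ⟨rfl, ?_⟩
    intro I hI hrI
    obtain ⟨x, hx⟩ := hI
    exact absurd (by rwa [Subsingleton.elim x r] at hx) hrI
  haveI : Nonempty {f : V → ℤ // IsGPF E r f} := ⟨⟨fun _ => -1, hdef⟩⟩
  haveI : Subsingleton {f : V → ℤ // IsGPF E r f} := by
    constructor
    intro f g
    apply Subtype.ext
    funext x
    rw [Subsingleton.elim x r, f.2.1, g.2.1]
  exact Nat.card_unique

lemma card_st_one (h1 : Fintype.card V = 1) (ends : ε → Sym2 V) :
    Nat.card {s : Finset ε // s.card = Fintype.card V - 1 ∧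
      (mAdj (s.val.map ends)).Connected} = 1 := by
  haveI hsub : Subsingleton V := Fintype.card_le_one_iff_subsingleton.mp (le_of_eq h1)
  have hne : Nonempty V := Fintype.card_pos_iff.mp (by omega)
  have hconn : ∀ s : Finset ε, (mAdj (s.val.map ends)).Connected := by
    intro s
    rw [SimpleGraph.connected_iff]
    refine ⟨?_, hne⟩
    intro a b
    rw [Subsingleton.elim a b]
  haveI : Nonempty {s : Finset ε // s.card = Fintype.card V - 1 ∧
      (mAdj (s.val.map ends)).Connected} := ⟨⟨∅, by simp [h1], hconn ∅⟩⟩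
  haveI : Subsingleton {s : Finset ε // s.card = Fintype.card V - 1 ∧
      (mAdj (s.val.map ends)).Connected} := by
    constructor
    intro s t
    apply Subtype.ext
    have hs : s.1.card = 0 := by rw [s.2.1, h1]
    have ht : t.1.card = 0 := by rw [t.2.1, h1]
    rw [Finset.card_eq_zero] at hs ht
    rw [hs, ht]
  exact Nat.card_unique

lemma card_pf_zero (h2 : 2 ≤ Fintype.card V) (r : V) (ends : ε → Sym2 V)
    (hno : ¬ ∃ (x : ε) (w : V), w ≠ r ∧ ends x = s(r, w)) :
    Nat.card {f : V → ℤ // IsGPF (univ.val.map ends) r f} = 0 := by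
  haveI : IsEmpty {f : V → ℤ // IsGPF (univ.val.map ends) r f} := by
    constructor
    rintro ⟨f, hf⟩
    set I : Finset V := univ.erase r with hI
    have hIne : I.Nonempty := by
      rw [← Finset.card_pos, hI, Finset.card_erase_of_mem (mem_univ r), Finset.card_univ]
      omega
    have hrI : r ∉ I := Finset.notMem_erase r univ
    obtain ⟨u, huI, h0, hlt⟩ := hf.2 I hIne hrI
    have hur : u ≠ r := (Finset.mem_erase.mp huI).1
    have hzero : outdeg (univ.val.map ends) I u = 0 := by
      unfold outdeg
      rw [Multiset.card_eq_zero, Multiset.filter_eq_nil]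
      rintro a ha ⟨w, hw, rfl⟩
      rw [Multiset.mem_map] at ha
      obtain ⟨x, _, hx⟩ := ha
      have hwr : w = r := by
        by_contra hwr
        exact hw (Finset.mem_erase.mpr ⟨hwr, mem_univ w⟩)
      subst hwr
      exact hno ⟨x, u, hur, by rw [hx, Sym2.eq_swap]⟩
    rw [hzero] at hlt
    norm_num at hlt
    linarith
  exact Nat.card_of_isEmpty

lemma card_st_zero (h2 : 2 ≤ Fintype.card V) (r : V) (ends : ε → Sym2 V)
    (hno : ¬ ∃ (x : ε) (w : V), w ≠ r ∧ ends x = s(r, w)) :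
    Nat.card {s : Finset ε // s.card = Fintype.card V - 1 ∧
      (mAdj (s.val.map ends)).Connected} = 0 := by
  haveI : IsEmpty {s : Finset ε // s.card = Fintype.card V - 1 ∧
      (mAdj (s.val.map ends)).Connected} := by
    constructor
    rintro ⟨s, hcard, hconn⟩
    obtain ⟨u, hu⟩ := Fintype.exists_ne_of_one_lt_card (by omega) r
    obtain ⟨w⟩ := hconn.preconnected r u
    cases w with
    | nil => exact hu rfl
    | cons h p =>
      rename_i b
      rw [mAdj_iff] at h
      obtain ⟨hrb, hmem⟩ := h
      rw [Multiset.mem_map] at hmem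
      obtain ⟨x, _, hx⟩ := hmem
      exact hno ⟨x, b, Ne.symm hrb, hx⟩
  exact Nat.card_of_isEmpty

end BaseCases

lemma card_subtype_ne' {α : Type} [Fintype α] [DecidableEq α] (a : α) :
    Fintype.card {x : α // x ≠ a} = Fintype.card α - 1 := by
  have h := Fintype.card_subtype_compl (fun x : α => x = a)
  simp only [Fintype.card_subtype_eq] at h
  convert h using 2

lemma main_aux (N : ℕ) : ∀ (V : Type) [Fintype V] [DecidableEq V] (ε : Type) [Fintype ε]
    (ends : ε → Sym2 V) (r : V), Fintype.card V + Fintype.card ε ≤ N →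
    Nat.card {f : V → ℤ // IsGPF (univ.val.map ends) r f}
      = Nat.card {s : Finset ε // s.card = Fintype.card V - 1 ∧
          (mAdj (s.val.map ends)).Connected} := by
  induction N with
  | zero =>
    intro V iV dV ε iε ends r hle
    have : 0 < Fintype.card V := Fintype.card_pos_iff.mpr ⟨r⟩
    omega
  | succ N ih =>
    intro V iV dV ε iε ends r hle
    classical
    by_cases h1 : Fintype.card V = 1
    · rw [card_pf_one h1, card_st_one h1]
    · have hVpos : 0 < Fintype.card V := Fintype.card_pos_iff.mpr ⟨r⟩
      have h2 : 2 ≤ Fintype.card V := by omega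
      by_cases hex : ∃ (x : ε) (w : V), w ≠ r ∧ ends x = s(r, w)
      · obtain ⟨e, v, hv, he⟩ := hex
        have hεpos : 0 < Fintype.card ε := Fintype.card_pos_iff.mpr ⟨e⟩
        have hεcard : Fintype.card {x : ε // x ≠ e} = Fintype.card ε - 1 :=
          card_subtype_ne' e
        have hVcard : Fintype.card {x : V // x ≠ v} = Fintype.card V - 1 :=
          card_subtype_ne' v
        set D : Multiset (Sym2 V) :=
          (univ : Finset {x : ε // x ≠ e}).val.map (fun x => ends x.val) with hD
        have hEcons : univ.val.map ends = s(r,v) ::ₘ D := by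
          rw [hD, univ_subtype_val_map (· ≠ e) ends, Finset.filter_ne' univ e,
            Finset.erase_val]
          conv_lhs => rw [← Multiset.cons_erase (show e ∈ univ.val from mem_univ e)]
          rw [Multiset.map_cons, he]
        have hDC : D.map (Sym2.map (ctr v r hv))
            = (univ : Finset {x : ε // x ≠ e}).val.map
                (fun x => Sym2.map (ctr v r hv) (ends x.val)) := by
          rw [hD, Multiset.map_map]
          rfl
        rw [hEcons, card_pf_rec hv D, card_st_rec ends hv e he h2, hDC]
        congr 1
        · exact ih V {x : ε // x ≠ e} (fun x => ends x.val) r (by omega)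
        · have := ih {x : V // x ≠ v} {x : ε // x ≠ e}
            (fun x => Sym2.map (ctr v r hv) (ends x.val)) ⟨r, Ne.symm hv⟩ (by omega)
          exact this
      · rw [card_pf_zero h2 r ends hex, card_st_zero h2 r ends hex]

/-- the number of `G`-parking functions of a connected multigraph `G`
(with edges indexed by `ε`, so parallel edges count with multiplicity) equals the
number of spanning trees of `G`. -/
theorem card_gpf_eq_card_spanning_trees (n : ℕ) (ε : Type) [Fintype ε]
    (ends : ε → Sym2 (Fin (n + 1)))
    (hconn : (mAdj (Finset.univ.val.map ends)).Connected) :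
    Nat.card {f : Fin (n + 1) → ℤ // IsGPF (Finset.univ.val.map ends) 0 f}
      = Nat.card {s : Finset ε // s.card = n ∧ (mAdj (s.val.map ends)).Connected} := by
  have h := main_aux (Fintype.card (Fin (n+1)) + Fintype.card ε) (Fin (n+1)) ε ends 0 (le_refl _)
  simp only [Fintype.card_fin, Nat.add_sub_cancel] at h
  exact h
end

section
/- For the complete graph K_{n+1} on vertices {0,1,...,n}, a function f with f(0) = -1 is a K_{n+1}-parking function if and only if (f(1),...,f(n)) is a classical parking function of length n. -/
open Finset

lemma outdeg_top (n : ℕ) (I : Finset (Fin (n+1))) (v : Fin (n+1)) (hv : v ∈ I) :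
    outdeg ((⊤ : SimpleGraph (Fin (n + 1))).edgeFinset.val) I v = n + 1 - I.card := by
  classical
  unfold outdeg
  rw [← Finset.filter_val, Finset.card_val]
  have : ((⊤ : SimpleGraph (Fin (n + 1))).edgeFinset.filter
      (fun e => ∃ w, w ∉ I ∧ e = s(v, w))) = Iᶜ.image (fun w => s(v, w)) := by
    ext e
    simp only [Finset.mem_filter, Finset.mem_image, Finset.mem_compl,
      SimpleGraph.mem_edgeFinset]
    constructor
    · rintro ⟨he, w, hw, rfl⟩
      exact ⟨w, hw, rfl⟩
    · rintro ⟨w, hw, rfl⟩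
      have hvw : v ≠ w := fun h => hw (h ▸ hv)
      exact ⟨by simpa [SimpleGraph.mem_edgeSet] using hvw, w, hw, rfl⟩
  refine (show _ = #(Iᶜ.image (fun w => s(v, w))) by convert congrArg Finset.card this).trans ?_
  rw [Finset.card_image_of_injective _ (fun a b h => Sym2.congr_right.mp h),
    Finset.card_compl, Fintype.card_fin]

lemma isPF_iff (n : ℕ) (a : Fin n → ℕ) :
    IsPF n a ↔ ∀ I : Finset (Fin n), I.Nonempty → ∃ v ∈ I, a v + I.card ≤ n := by
  constructor
  · rintro ⟨σ, hmono, hle⟩ I hI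
    set J := I.image σ.symm with hJ
    have hJne : J.Nonempty := hI.image _
    set j := J.min' hJne with hj
    have hjJ : j ∈ J := J.min'_mem hJne
    obtain ⟨u, hu, huj⟩ := Finset.mem_image.mp hjJ
    refine ⟨u, hu, ?_⟩
    have hau : a u ≤ (j : ℕ) := by
      have := hle j
      simpa [Function.comp, ← huj] using this
    have hcard : I.card = J.card :=
      (Finset.card_image_of_injective _ σ.symm.injective).symm
    have hsub : J ⊆ Finset.Ici j := fun x hx => Finset.mem_Ici.mpr (J.min'_le x hx)
    have := Finset.card_le_card hsub
    rw [Fin.card_Ici] at this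
    have hjn : (j : ℕ) < n := j.isLt
    omega
  · intro h
    refine ⟨Tuple.sort a, Tuple.monotone_sort a, fun i => ?_⟩
    set I := (Finset.Ici i).image (Tuple.sort a) with hI
    have hIne : I.Nonempty := ⟨Tuple.sort a i, Finset.mem_image_of_mem _ (Finset.mem_Ici.mpr le_rfl)⟩
    obtain ⟨v, hvI, hv⟩ := h I hIne
    obtain ⟨k, hk, rfl⟩ := Finset.mem_image.mp hvI
    have hcard : I.card = n - i := by
      rw [hI, Finset.card_image_of_injective _ (Tuple.sort a).injective, Fin.card_Ici]
    have hmono := Tuple.monotone_sort a (Finset.mem_Ici.mp hk)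
    have hin : (i : ℕ) < n := i.isLt
    simp only [Function.comp] at hmono ⊢
    omega

/-- for the complete graph `K_{n+1}` with root `0`, a function with
`f 0 = -1` is a `K_{n+1}`-parking function iff `(f(1),...,f(n))` is a classical
parking function of length `n`. -/
theorem gpf_complete_iff_classical (n : ℕ) (f : Fin (n + 1) → ℤ) (hf0 : f 0 = -1) :
    IsGPF ((⊤ : SimpleGraph (Fin (n + 1))).edgeFinset.val) 0 f ↔
      ((∀ i : Fin n, 0 ≤ f i.succ) ∧ IsPF n (fun i => (f i.succ).toNat)) := by
  classical
  constructor
  · rintro ⟨-, h⟩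
    have hnn : ∀ i : Fin n, 0 ≤ f i.succ := by
      intro i
      obtain ⟨v, hv, h0, -⟩ := h {i.succ} ⟨i.succ, Finset.mem_singleton_self _⟩
        (by simp [Finset.mem_singleton, (Fin.succ_ne_zero i).symm])
      rwa [Finset.mem_singleton.mp hv] at h0
    refine ⟨hnn, (isPF_iff n _).mpr ?_⟩
    intro J hJ
    set I := J.image Fin.succ with hI
    have hIne : I.Nonempty := hJ.image _
    have h0I : (0 : Fin (n+1)) ∉ I := by
      simp only [hI, Finset.mem_image]
      rintro ⟨j, -, hj⟩
      exact Fin.succ_ne_zero j hj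
    obtain ⟨v, hvI, h0v, hlt⟩ := h I hIne h0I
    obtain ⟨j, hjJ, rfl⟩ := Finset.mem_image.mp hvI
    refine ⟨j, hjJ, ?_⟩
    rw [outdeg_top n I _ hvI] at hlt
    have hcard : I.card = J.card := Finset.card_image_of_injective _ (Fin.succ_injective n)
    have hJn : J.card ≤ n := by
      simpa using Finset.card_le_card (Finset.subset_univ J)
    have htoNat : ((f j.succ).toNat : ℤ) = f j.succ := Int.toNat_of_nonneg (hnn j)
    have : ((f j.succ).toNat : ℤ) < ((n + 1 - I.card : ℕ) : ℤ) := by rw [htoNat]; exact hlt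
    have h2 : (f j.succ).toNat < n + 1 - I.card := by exact_mod_cast this
    omega
  · rintro ⟨hnn, hPF⟩
    refine ⟨hf0, fun I hIne h0I => ?_⟩
    set J := Finset.univ.filter (fun i : Fin n => i.succ ∈ I) with hJ
    have hIJ : I = J.image Fin.succ := by
      ext v
      simp only [hJ, Finset.mem_image, Finset.mem_filter, Finset.mem_univ, true_and]
      constructor
      · intro hv
        obtain ⟨j, rfl⟩ := Fin.exists_succ_eq.mpr (fun h => h0I (h ▸ hv))
        exact ⟨j, hv, rfl⟩
      · rintro ⟨j, hj, rfl⟩; exact hj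
    have hJne : J.Nonempty := by
      obtain ⟨v, hv⟩ := hIne
      rw [hIJ] at hv
      obtain ⟨j, hj, -⟩ := Finset.mem_image.mp hv
      exact ⟨j, hj⟩
    obtain ⟨j, hjJ, hle⟩ := (isPF_iff n _).mp hPF J hJne
    have hjI : j.succ ∈ I := by rw [hIJ]; exact Finset.mem_image_of_mem _ hjJ
    refine ⟨j.succ, hjI, hnn j, ?_⟩
    rw [outdeg_top n I _ hjI]
    have hcard : I.card = J.card := by
      rw [hIJ]; exact Finset.card_image_of_injective _ (Fin.succ_injective n)
    have hJn : J.card ≤ n := by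
      simpa using Finset.card_le_card (Finset.subset_univ J)
    have htoNat : ((f j.succ).toNat : ℤ) = f j.succ := Int.toNat_of_nonneg (hnn j)
    have : (f j.succ).toNat + J.card ≤ n := hle
    have hlt : (f j.succ).toNat < n + 1 - I.card := by omega
    calc f j.succ = ((f j.succ).toNat : ℤ) := htoNat.symm
      _ < ((n + 1 - I.card : ℕ) : ℤ) := by exact_mod_cast hlt
end

section
/- Let α = (a_1,...,a_n) be a classical parking function and suppose a_i = j is an α-critical maximum. Then exactly j of the terms of α are strictly less than j. -/
open Finset

/-- if `a_i = j` is an `α`-critical maximum of a classical parking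
function `α`, then exactly `j` terms of `α` are strictly less than `j`. -/
theorem crit_max_count_below (n : ℕ) (a : Fin n → ℕ) (hpf : IsPF n a) (i : Fin n)
    (hcrit : IsCritMax n a i) :
    (Finset.univ.filter (fun k => a k < a i)).card = a i := by
  classical
  obtain ⟨σ, hmono, hb⟩ := hpf
  obtain ⟨hcard, hord⟩ := hcrit
  set j := a i with hj
  have hjn : j < n := by
    have h1 : (a ∘ σ) (σ.symm i) ≤ ((σ.symm i : Fin n) : ℕ) := hb (σ.symm i)
    simp only [Function.comp_apply, Equiv.apply_symm_apply] at h1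
    exact lt_of_le_of_lt h1 (σ.symm i).isLt
  set m := (Finset.univ.filter (fun k => a k < j)).card with hm
  have h1 : m + (Finset.univ.filter (fun k => ¬ a k < j)).card = n := by
    rw [hm, Finset.card_filter_add_card_filter_not]
    simp
  have h2 : (Finset.univ.filter (fun k => ¬ a k < j)).card
      = (Finset.univ.filter (fun k => a k = j)).card
        + (Finset.univ.filter (fun k => j < a k)).card := by
    rw [← Finset.card_union_of_disjoint]
    · congr 1
      ext k
      simp only [Finset.mem_filter, Finset.mem_union, Finset.mem_univ, true_and]
      omega
    · rw [Finset.disjoint_filter]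
      intro k _ hk
      omega
  have h3 : 1 ≤ (Finset.univ.filter (fun k => a k = j)).card := by
    exact Finset.card_pos.mpr ⟨i, by simp [hj]⟩
  have hle : m ≤ j := by omega
  -- now show j ≤ m
  have hmcount : (Finset.univ.filter (fun k => a (σ k) < j)).card = m := by
    rw [hm]
    apply Finset.card_bij (fun k _ => σ k)
    · intro k hk
      simp only [Finset.mem_filter, Finset.mem_univ, true_and] at hk ⊢
      exact hk
    · intro k _ l _ h
      exact σ.injective h
    · intro k hk
      simp only [Finset.mem_filter, Finset.mem_univ, true_and] at hk
      exact ⟨σ.symm k, by simp [hk]⟩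
  have hmn : m < n := lt_of_le_of_lt hle hjn
  set M : Fin n := ⟨m, hmn⟩ with hM
  have hge : j ≤ a (σ M) := by
    by_contra h
    push_neg at h
    have sub : Finset.Iic M ⊆ Finset.univ.filter (fun k => a (σ k) < j) := by
      intro k hk
      rw [Finset.mem_Iic] at hk
      simp only [Finset.mem_filter, Finset.mem_univ, true_and]
      exact lt_of_le_of_lt (hmono hk) h
    have hc := Finset.card_le_card sub
    rw [hmcount] at hc
    have : (Finset.Iic M).card = m + 1 := by
      rw [Fin.card_Iic]
    omega
  have hle2 : a (σ M) ≤ m := by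
    have := hb M
    simpa using this
  omega
end
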